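/- Pointwise bound ((3.4), left half): Let s ≥ 1 be an integer and let u : ℝ → ℝ be (s+1) times continuously differentiable on [0,1] with u(0) = 0. Then for every x ∈ (0,1], |(d^s/dx^s)( u(x)/x )| ≤ s! · x^{-1} · ∫_{0}^{x} |u^{(s+1)}(y)| dy. -/

import Mathlib

set_option maxHeartbeats 1000000 in
/-- Pointwise bound ((3.4), left half). -/
theorem pointwise_bound_left (s : ℕ) (hs : 1 ≤ s) (u : ℝ → ℝ)
    (hu : ContDiffOn ℝ (s + 1) u (Set.Icc 0 1)) (hu0 : u 0 = 0) :
    ∀ x ∈ Set.Ioc (0:ℝ) 1,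
      |iteratedDerivWithin s (fun y => u y / y) (Set.Ioc 0 1) x| ≤
        (Nat.factorial s : ℝ) * x⁻¹ *
          ∫ y in (0:ℝ)..x, |iteratedDerivWithin (s + 1) u (Set.Icc 0 1) y| := by
  set T : Set ℝ := Set.Icc 0 1 with hT
  set D : ℕ → ℝ → ℝ := fun k => iteratedDerivWithin k u T with hD
  have hUT : UniqueDiffOn ℝ T := uniqueDiffOn_Icc zero_lt_one
  have hA : ∀ k, k ≤ s + 1 → ContinuousOn (D k) T := fun k hk =>
    hu.continuousOn_iteratedDerivWithin (by exact_mod_cast hk) hUT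
  have hDer : ∀ k, k < s + 1 → ∀ y ∈ Set.Ioo (0:ℝ) 1, HasDerivAt (D k) (D (k+1) y) y := by
    intro k hk y hy
    have hdiff := hu.differentiableOn_iteratedDerivWithin
      (show (k : WithTop ℕ∞) < (s+1 : ℕ) by exact_mod_cast hk) hUT
    have hyT : y ∈ T := Set.Ioo_subset_Icc_self hy
    have h1 : HasDerivWithinAt (D k) (derivWithin (D k) T y) T y :=
      ((hdiff y hyT).hasDerivWithinAt)
    have h2 : derivWithin (D k) T y = D (k+1) y := (congrFun iteratedDerivWithin_succ y).symm
    rw [h2] at h1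
    exact h1.hasDerivAt (Icc_mem_nhds hy.1 hy.2)
  -- FTC helper
  have hFTC : ∀ k, k ≤ s → ∀ x ∈ Set.Ioc (0:ℝ) 1,
      (∫ y in (0:ℝ)..x, ((k:ℝ) * y^(k-1) * D k y + y^k * D (k+1) y))
        = x^k * D k x - (0:ℝ)^k * D k 0 := by
    intro k hk x hx
    have hsub : Set.Icc (0:ℝ) x ⊆ T := Set.Icc_subset_Icc le_rfl hx.2
    have huIcc : Set.uIcc (0:ℝ) x = Set.Icc 0 x := Set.uIcc_of_le hx.1.le
    have hcont : ContinuousOn (fun y => y^k * D k y) (Set.Icc 0 x) :=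
      (continuousOn_pow k).mul ((hA k (by omega)).mono hsub)
    have hcont' : ContinuousOn (fun y => (k:ℝ) * y^(k-1) * D k y + y^k * D (k+1) y)
        (Set.Icc 0 x) := by
      exact ((continuousOn_const.mul (continuousOn_pow (k-1))).mul
        ((hA k (by omega)).mono hsub)).add
        ((continuousOn_pow k).mul ((hA (k+1) (by omega)).mono hsub))
    have hint : IntervalIntegrable (fun y => (k:ℝ) * y^(k-1) * D k y + y^k * D (k+1) y)
        MeasureTheory.volume 0 x := (hcont'.mono (by rw [huIcc])).intervalIntegrable
    have := intervalIntegral.integral_eq_sub_of_hasDeriv_right_of_le hx.1.le hcont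
      (fun y hy => by
        have hy1 : y ∈ Set.Ioo (0:ℝ) 1 := ⟨hy.1, lt_of_lt_of_le hy.2 hx.2⟩
        exact (((hasDerivAt_pow k y).mul (hDer k (by omega) y hy1)).hasDerivWithinAt.mono
          (fun z hz => trivial))) hint
    simpa using this
  -- main induction
  have hmain : ∀ k, k ≤ s → Set.EqOn (iteratedDerivWithin k (fun y => u y / y) (Set.Ioc 0 1))
      (fun x => (x^(k+1))⁻¹ * ∫ y in (0:ℝ)..x, y^k * D (k+1) y) (Set.Ioc 0 1) := by
    have hUS : UniqueDiffOn ℝ (Set.Ioc (0:ℝ) 1) := uniqueDiffOn_Ioc 0 1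
    set v : ℕ → ℝ → ℝ := fun k y => D k (Set.projIcc (0:ℝ) 1 zero_le_one y : ℝ) with hv
    have hvc : ∀ k, k ≤ s + 1 → Continuous (v k) := by
      intro k hk
      exact (hA k hk).comp_continuous (continuous_subtype_val.comp continuous_projIcc)
        (fun y => (Set.projIcc (0:ℝ) 1 zero_le_one y).2)
    have hveq : ∀ k, ∀ y ∈ Set.Icc (0:ℝ) 1, v k y = D k y := by
      intro k y hy
      simp [hv, Set.projIcc_of_mem zero_le_one hy]
    intro k hk
    induction k with
    | zero =>
      intro x hx
      have h0 := hFTC 0 (by omega) x hx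
      simp only [pow_zero, one_mul, Nat.cast_zero, zero_mul, zero_add] at h0 ⊢
      have hD0x : D 0 x = u x := by simp [hD]
      have hD00 : D 0 0 = u 0 := by simp [hD]
      rw [iteratedDerivWithin_zero, h0, hD0x, hD00, hu0]
      ring
    | succ k ih =>
      have hks : k ≤ s := by omega
      have IH := ih hks
      intro x hx
      have hx0 : x ≠ 0 := ne_of_gt hx.1
      have hxT : x ∈ Set.Icc (0:ℝ) 1 := ⟨hx.1.le, hx.2⟩
      have husub : Set.uIcc (0:ℝ) x ⊆ Set.Icc 0 1 := by
        rw [Set.uIcc_of_le hx.1.le]; exact Set.Icc_subset_Icc le_rfl hx.2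
      rw [iteratedDerivWithin_succ]
      rw [derivWithin_congr IH (IH hx)]
      set Gbar : ℝ → ℝ := fun x => (x^(k+1))⁻¹ * ∫ y in (0:ℝ)..x, y^k * v (k+1) y with hGbar
      have hEq : Set.EqOn (fun x => (x^(k+1))⁻¹ * ∫ y in (0:ℝ)..x, y^k * D (k+1) y)
          Gbar (Set.Ioc 0 1) := by
        intro z hz
        simp only [hGbar]
        congr 1
        apply intervalIntegral.integral_congr
        intro y hy
        have hyT : y ∈ Set.Icc (0:ℝ) 1 := by
          rw [Set.uIcc_of_le hz.1.le] at hy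
          exact Set.Icc_subset_Icc le_rfl hz.2 hy
        show y^k * D (k+1) y = y^k * v (k+1) y
        rw [hveq (k+1) y hyT]
      rw [derivWithin_congr hEq (hEq hx)]
      have hgc : Continuous (fun y => y^k * v (k+1) y) :=
        (continuous_pow k).mul (hvc (k+1) (by omega))
      have h2 : HasDerivAt (fun z => ∫ y in (0:ℝ)..z, y^k * v (k+1) y)
          (x^k * v (k+1) x) x := by
        exact intervalIntegral.integral_hasDerivAt_right
          (hgc.intervalIntegrable 0 x)
          (hgc.stronglyMeasurable.stronglyMeasurableAtFilter)
          hgc.continuousAt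
      have h1 : HasDerivAt (fun z : ℝ => (z^(k+1))⁻¹)
          (-((k+1 : ℝ) * x^k) / (x^(k+1))^2) x := by
        have := (hasDerivAt_pow (k+1) x).inv (pow_ne_zero _ hx0)
        simp [Nat.add_sub_cancel] at this
        exact this
      have hG : HasDerivAt Gbar
          (-((k+1 : ℝ) * x^k) / (x^(k+1))^2 * (∫ y in (0:ℝ)..x, y^k * v (k+1) y)
            + (x^(k+1))⁻¹ * (x^k * v (k+1) x)) x := by
        exact h1.mul h2
      rw [hG.hasDerivWithinAt.derivWithin (hUS x hx)]
      have hIcong : (∫ y in (0:ℝ)..x, y^k * v (k+1) y)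
          = ∫ y in (0:ℝ)..x, y^k * D (k+1) y := by
        apply intervalIntegral.integral_congr
        intro y hy
        show y^k * v (k+1) y = y^k * D (k+1) y
        rw [hveq (k+1) y (husub hy)]
      have hibp := hFTC (k+1) hk x hx
      have hint1 : IntervalIntegrable (fun y => ((k:ℝ)+1) * y^k * D (k+1) y) MeasureTheory.volume 0 x := by
        exact (((continuousOn_const.mul (continuousOn_pow k)).mul
          ((hA (k+1) (by omega)).mono husub)).mono (by rfl)).intervalIntegrable
      have hint2 : IntervalIntegrable (fun y => y^(k+1) * D (k+2) y) MeasureTheory.volume 0 x := by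
        exact (((continuousOn_pow (k+1)).mul
          ((hA (k+2) (by omega)).mono husub)).mono (by rfl)).intervalIntegrable
      have hsplit : (∫ y in (0:ℝ)..x, (((k:ℝ)+1) * y^k * D (k+1) y + y^(k+1) * D (k+1+1) y))
          = (∫ y in (0:ℝ)..x, ((k:ℝ)+1) * y^k * D (k+1) y)
            + ∫ y in (0:ℝ)..x, y^(k+1) * D (k+2) y := by
        rw [← intervalIntegral.integral_add hint1 hint2]
      have hpull : (∫ y in (0:ℝ)..x, ((k:ℝ)+1) * y^k * D (k+1) y)
          = ((k:ℝ)+1) * ∫ y in (0:ℝ)..x, y^k * D (k+1) y := by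
        rw [← intervalIntegral.integral_const_mul]
        congr 1; ext y; ring
      simp only [Nat.add_sub_cancel] at hibp
      push_cast at hibp
      rw [hsplit, hpull] at hibp
      have hzero : ((0:ℝ))^(k+1) * D (k+1) 0 = 0 := by simp
      rw [hzero, sub_zero] at hibp
      have hvx : v (k+1) x = D (k+1) x := hveq (k+1) x hxT
      rw [hIcong, hvx]
      beta_reduce
      have hI2 : (∫ y in (0:ℝ)..x, y^(k+1) * D (k+2) y)
          = x^(k+1) * D (k+1) x - ((k:ℝ)+1) * ∫ y in (0:ℝ)..x, y^k * D (k+1) y := by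
        linarith [hibp]
      show _ = (x^(k+1+1))⁻¹ * ∫ y in (0:ℝ)..x, y^(k+1) * D (k+1+1) y
      rw [show k+1+1 = k+2 from rfl, hI2]
      have hxp : (x:ℝ)^(k+1) ≠ 0 := pow_ne_zero _ hx0
      field_simp
      ring
  -- final bound
  intro x hx
  have hx0 : (0:ℝ) < x := hx.1
  rw [hmain s le_rfl hx]
  beta_reduce
  have husub : Set.uIcc (0:ℝ) x ⊆ Set.Icc 0 1 := by
    rw [Set.uIcc_of_le hx0.le]; exact Set.Icc_subset_Icc le_rfl hx.2
  have hcontD : ContinuousOn (D (s+1)) (Set.uIcc 0 x) := (hA (s+1) le_rfl).mono husub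
  have hI : |∫ y in (0:ℝ)..x, y^s * D (s+1) y| ≤ ∫ y in (0:ℝ)..x, |y^s * D (s+1) y| :=
    intervalIntegral.abs_integral_le_integral_abs hx0.le
  have hmono : (∫ y in (0:ℝ)..x, |y^s * D (s+1) y|)
      ≤ ∫ y in (0:ℝ)..x, x^s * |D (s+1) y| := by
    apply intervalIntegral.integral_mono_on hx0.le
    · exact (((continuousOn_pow s).mul hcontD).abs.mono (by rw [Set.uIcc_of_le hx0.le])
        ).intervalIntegrable
    · exact ((continuousOn_const.mul hcontD.abs).mono (by rw [Set.uIcc_of_le hx0.le])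
        ).intervalIntegrable
    · intro y hy
      rw [abs_mul, abs_pow, abs_of_nonneg hy.1]
      exact mul_le_mul_of_nonneg_right (pow_le_pow_left₀ hy.1 hy.2 s) (abs_nonneg _)
  have hJ : (∫ y in (0:ℝ)..x, x^s * |D (s+1) y|)
      = x^s * ∫ y in (0:ℝ)..x, |D (s+1) y| := intervalIntegral.integral_const_mul _ _
  have hJnn : (0:ℝ) ≤ ∫ y in (0:ℝ)..x, |D (s+1) y| :=
    intervalIntegral.integral_nonneg hx0.le (fun y _ => abs_nonneg _)
  have hxpow : (0:ℝ) < x^(s+1) := pow_pos hx0 _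
  calc |(x^(s+1))⁻¹ * ∫ y in (0:ℝ)..x, y^s * D (s+1) y|
      = (x^(s+1))⁻¹ * |∫ y in (0:ℝ)..x, y^s * D (s+1) y| := by
        rw [abs_mul, abs_of_nonneg (le_of_lt (inv_pos.2 hxpow))]
    _ ≤ (x^(s+1))⁻¹ * (x^s * ∫ y in (0:ℝ)..x, |D (s+1) y|) := by
        apply mul_le_mul_of_nonneg_left _ (le_of_lt (inv_pos.2 hxpow))
        rw [← hJ]; exact hI.trans hmono
    _ = x⁻¹ * ∫ y in (0:ℝ)..x, |D (s+1) y| := by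
        rw [pow_succ]
        field_simp
    _ ≤ (Nat.factorial s : ℝ) * x⁻¹ * ∫ y in (0:ℝ)..x, |D (s+1) y| := by
        rw [mul_assoc]
        apply le_mul_of_one_le_left
        · exact mul_nonneg (inv_nonneg.2 hx0.le) hJnn
        · exact_mod_cast Nat.one_le_iff_ne_zero.2 (Nat.factorial_ne_zero s)
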